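/- Let n ≥ 1 and let A = (a_ij) ∈ ℝ^{n×n}. With the induced 1-norm ‖M‖_1 = max_j Σ_i |m_ij| (the maximum absolute column sum, equivalently the ∞-operator norm of the transpose Mᵀ), the one-sided limit lim_{δ→0⁺} (‖I + δ·A‖_1 − 1)/δ exists and equals max_j [a_jj + Σ_{i≠j} |a_ij|]. That is, the logarithmic norm of A induced by the 1-norm is μ_1(A) = max_j [a_jj + Σ_{i,i≠j} |a_ij|]. -/

import Mathlib

open Matrix

/-! The logarithmic norm of A induced by the 1-norm (maximum absolute column sum,
i.e. the ∞-operator norm of the transpose): μ_1(A) = lim_{δ→0⁺} (‖I + δA‖_1 − 1)/δ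
= max_j [a_jj + Σ_{i≠j} |a_ij|]. -/

attribute [local instance] Matrix.linftyOpNormedAddCommGroup

theorem logNorm_l1_eq_max_col
    (n : ℕ) (hn : 1 ≤ n) (A : Matrix (Fin n) (Fin n) ℝ) :
    Filter.Tendsto
      (fun δ : ℝ => (‖((1 : Matrix (Fin n) (Fin n) ℝ) + δ • A)ᵀ‖ - 1) / δ)
      (nhdsWithin 0 (Set.Ioi 0))
      (nhds (⨆ j : Fin n, (A j j + ∑ i ∈ Finset.univ.erase j, |A i j|))) := by
  haveI : Nonempty (Fin n) := ⟨⟨0, hn⟩⟩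
  set c : Fin n → ℝ := fun j => A j j + ∑ i ∈ Finset.univ.erase j, |A i j| with hc
  have hne : (Finset.univ : Finset (Fin n)).Nonempty := Finset.univ_nonempty
  have hCsup : (⨆ j, c j) = Finset.univ.sup' hne c := (Finset.sup'_univ_eq_ciSup c).symm
  set K : ℝ := Finset.univ.sup' hne (fun j => |A j j|) + 1 with hK
  have hKpos : 0 < K := by
    obtain ⟨j0⟩ := ‹Nonempty (Fin n)›
    have : (0:ℝ) ≤ Finset.univ.sup' hne (fun j => |A j j|) :=
      le_trans (abs_nonneg (A j0 j0)) (Finset.le_sup' (fun j => |A j j|) (Finset.mem_univ j0))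
    linarith
  have key : ∀ δ : ℝ, 0 < δ → δ < 1 / K →
      (‖((1 : Matrix (Fin n) (Fin n) ℝ) + δ • A)ᵀ‖ - 1) / δ = ⨆ j, c j := by
    intro δ hδ hδK
    have hδA : ∀ j : Fin n, 0 ≤ 1 + δ * A j j := by
      intro j
      have h1 : |A j j| ≤ K - 1 := by
        have := Finset.le_sup' (fun j => |A j j|) (Finset.mem_univ j)
        linarith
      have h2 : δ * |A j j| < 1 := by
        calc δ * |A j j| ≤ δ * K := by nlinarith [abs_nonneg (A j j)]
          _ < 1 := by rw [lt_div_iff₀ hKpos] at hδK; linarith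
      nlinarith [neg_abs_le (A j j)]
    have hnorm : ‖((1 : Matrix (Fin n) (Fin n) ℝ) + δ • A)ᵀ‖
        = Finset.univ.sup' hne (fun j => ∑ i, ‖((1 : Matrix (Fin n) (Fin n) ℝ) + δ • A) i j‖) := by
      rw [Matrix.linfty_opNorm_def, ← Finset.sup'_eq_sup hne,
        Finset.comp_sup'_eq_sup'_comp hne NNReal.toReal
          (fun x y => NNReal.coe_mono.map_sup x y)]
      congr 1
      ext j
      simp [Function.comp, Matrix.transpose_apply, NNReal.coe_sum, coe_nnnorm]
    have hcol : ∀ j : Fin n,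
        (∑ i, ‖((1 : Matrix (Fin n) (Fin n) ℝ) + δ • A) i j‖) = 1 + δ * c j := by
      intro j
      rw [← Finset.add_sum_erase _ _ (Finset.mem_univ j)]
      have hdiag : ‖((1 : Matrix (Fin n) (Fin n) ℝ) + δ • A) j j‖ = 1 + δ * A j j := by
        simp [Matrix.add_apply, Matrix.one_apply, Matrix.smul_apply, Real.norm_eq_abs,
          abs_of_nonneg (hδA j), smul_eq_mul]
      have hoff : ∀ i ∈ Finset.univ.erase j,
          ‖((1 : Matrix (Fin n) (Fin n) ℝ) + δ • A) i j‖ = δ * |A i j| := by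
        intro i hi
        have hij : i ≠ j := Finset.ne_of_mem_erase hi
        simp [Matrix.add_apply, Matrix.one_apply, hij, Matrix.smul_apply, smul_eq_mul,
          Real.norm_eq_abs, abs_mul, abs_of_pos hδ]
      rw [hdiag, Finset.sum_congr rfl hoff, ← Finset.mul_sum, hc]
      ring
    have hsup : Finset.univ.sup' hne (fun j => 1 + δ * c j)
        = 1 + δ * Finset.univ.sup' hne c := by
      have hhom : ∀ x y : ℝ, (fun x => 1 + δ * x) (x ⊔ y)
          = (fun x => 1 + δ * x) x ⊔ (fun x => 1 + δ * x) y := by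
        intro x y
        show 1 + δ * max x y = max (1 + δ * x) (1 + δ * y)
        rw [mul_max_of_nonneg _ _ hδ.le, max_add_add_left]
      have := Finset.comp_sup'_eq_sup'_comp hne (f := c) (fun x => 1 + δ * x) hhom
      simpa [Function.comp] using this.symm
    rw [hnorm]
    rw [show (fun j => ∑ i, ‖((1 : Matrix (Fin n) (Fin n) ℝ) + δ • A) i j‖)
        = fun j => 1 + δ * c j from funext hcol, hsup, hCsup]
    field_simp
    ring
  have hmem : Set.Ioo (0:ℝ) (1/K) ∈ nhdsWithin (0:ℝ) (Set.Ioi 0) :=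
    Ioo_mem_nhdsGT_of_mem ⟨le_refl 0, by positivity⟩
  refine Filter.Tendsto.congr' ?_ tendsto_const_nhds
  filter_upwards [hmem] with δ hδ
  exact (key δ hδ.1 hδ.2).symm
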